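/- Let V be a finite set and for each v ∈ V let (a¹ᵥ, b¹ᵥ), (a²ᵥ, b²ᵥ), (a³ᵥ, b³ᵥ) ∈ ℤ × ℤ satisfy the balancing condition a¹ᵥ + a²ᵥ + a³ᵥ = 0 and b¹ᵥ + b²ᵥ + b³ᵥ = 0. Let τ be in the complex upper half-plane and t₁, t₂ ∈ ℂ be such that aʲᵥ t₁ + bʲᵥ t₂ ∉ ℤ + τℤ for every v ∈ V and j ∈ {1,2,3}. Then for every z ∈ ℂ, Z(−1/τ, z/τ; t₁/τ, t₂/τ) = e^{3πiz²/τ} · Z(τ, z; t₁, t₂). -/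
import Mathlib


open Complex Filter Topology

/-- The Jacobi theta function θ₁(τ, z) = i·∑_{n∈ℤ} (−1)ⁿ e^{πiτ(n−1/2)²} e^{2πiz(n−1/2)}. -/
noncomputable def theta1 (τ z : ℂ) : ℂ :=
  Complex.I * ∑' n : ℤ, (-1 : ℂ) ^ n *
    Complex.exp (Real.pi * Complex.I * τ * ((n : ℂ) - 1/2) ^ 2) *
    Complex.exp (2 * Real.pi * Complex.I * z * ((n : ℂ) - 1/2))

/-- The lattice ℤ + τℤ ⊂ ℂ. -/
def lattice (τ : ℂ) : Set ℂ := {w : ℂ | ∃ m n : ℤ, w = (m : ℂ) + (n : ℂ) * τ}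

/-- A(q,y,u) = ∏_{n≥1} (1−yuq^{n−1})(1−(yu)⁻¹qⁿ) / ((1−uq^{n−1})(1−u⁻¹qⁿ)). -/
noncomputable def A (q y u : ℂ) : ℂ :=
  ∏' n : ℕ, ((1 - y * u * q ^ n) * (1 - (y * u)⁻¹ * q ^ (n + 1))) /
    ((1 - u * q ^ n) * (1 - u⁻¹ * q ^ (n + 1)))

/-- B(q,y) = ∏_{n≥1} (1−yq^{n−1})(1−y⁻¹qⁿ) / (1−qⁿ)². -/
noncomputable def B (q y : ℂ) : ℂ :=
  ∏' n : ℕ, ((1 - y * q ^ n) * (1 - y⁻¹ * q ^ (n + 1))) / (1 - q ^ (n + 1)) ^ 2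

/-- Equivariant elliptic genus of the toric CY 3-fold with fixed-point set `V`
and weight vectors `w v j = (aʲᵥ, bʲᵥ)`. -/
noncomputable def Z {V : Type*} [Fintype V] (w : V → Fin 3 → ℤ × ℤ)
    (τ z t₁ t₂ : ℂ) : ℂ :=
  ∑ v : V, ∏ j : Fin 3,
    theta1 τ (z + ((w v j).1 : ℂ) * t₁ + ((w v j).2 : ℂ) * t₂) /
      theta1 τ (((w v j).1 : ℂ) * t₁ + ((w v j).2 : ℂ) * t₂)


private lemma theta1_eq (τ z : ℂ) :
    theta1 τ z = Complex.I * Complex.exp (Real.pi * I * τ / 4 - Real.pi * I * z) *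
      jacobiTheta₂ (z + 1/2 - τ/2) τ := by
  rw [theta1, jacobiTheta₂, mul_assoc Complex.I]
  congr 1
  rw [← tsum_mul_left]
  refine tsum_congr fun n => ?_
  rw [jacobiTheta₂_term, show ((-1 : ℂ) ^ n) = Complex.exp ((n : ℂ) * (Real.pi * I)) by
    rw [Complex.exp_int_mul, Complex.exp_pi_mul_I],
    ← Complex.exp_add, ← Complex.exp_add, ← Complex.exp_add]
  congr 1
  ring

private lemma theta1_modular (τ : ℂ) (hτ : τ ≠ 0) (z : ℂ) :
    theta1 (-1/τ) (z/τ) =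
      -I * (-I * τ) ^ (1/2 : ℂ) * Complex.exp (Real.pi * I * z ^ 2 / τ) * theta1 τ z := by
  have hc : ((-I * τ) ^ (1/2 : ℂ)) ≠ 0 := by
    intro h
    rcases (Complex.cpow_eq_zero_iff _ _).mp h with ⟨h1, -⟩
    exact hτ (by simpa [Complex.I_ne_zero] using mul_eq_zero.mp h1)
  set z' : ℂ := z + 1/2 + τ/2 with hz'
  have hFE := jacobiTheta₂_functional_equation z' τ
  have hJ : jacobiTheta₂ (z'/τ) (-1/τ) =
      (-I * τ) ^ (1/2 : ℂ) * Complex.exp (Real.pi * I * z' ^ 2 / τ) * jacobiTheta₂ z' τ := by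
    rw [hFE]
    rw [show (-(Real.pi : ℂ)) * I * z' ^ 2 / τ = -(Real.pi * I * z' ^ 2 / τ) by ring,
      Complex.exp_neg]
    field_simp
  have hshift : jacobiTheta₂ z' τ =
      Complex.exp (-Real.pi * I * (τ + 2 * (z + 1/2 - τ/2))) *
        jacobiTheta₂ (z + 1/2 - τ/2) τ := by
    rw [show z' = (z + 1/2 - τ/2) + τ by rw [hz']; ring, jacobiTheta₂_add_left']
  rw [theta1_eq, theta1_eq, show z/τ + 1/2 - (-1/τ)/2 = z'/τ by rw [hz']; field_simp; ring,
    hJ, hshift]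
  have e2 : Complex.exp (-(Real.pi : ℂ) * I / 2) = -I := by
    rw [show -(Real.pi : ℂ) * I / 2 = (-(Real.pi/2) : ℝ) * I by push_cast; ring,
      Complex.exp_mul_I]
    push_cast
    simp
  have e1 : Complex.exp (Real.pi * I * (-1 / τ) / 4 - Real.pi * I * (z / τ)) *
      (Complex.exp (Real.pi * I * z' ^ 2 / τ) *
        Complex.exp (-Real.pi * I * (τ + 2 * (z + 1 / 2 - τ / 2)))) =
      Complex.exp (Real.pi * I * z ^ 2 / τ) *
        Complex.exp (Real.pi * I * τ / 4 - Real.pi * I * z) *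
        Complex.exp (-(Real.pi : ℂ) * I / 2) := by
    rw [← Complex.exp_add, ← Complex.exp_add, ← Complex.exp_add, ← Complex.exp_add]
    congr 1
    rw [hz']
    field_simp
    ring
  set c : ℂ := (-I * τ) ^ (1/2 : ℂ)
  set Θ : ℂ := jacobiTheta₂ (z + 1/2 - τ/2) τ
  linear_combination (I * c * Θ) * e1 +
    (I * c * Θ * Complex.exp (Real.pi * I * z ^ 2 / τ) *
      Complex.exp (Real.pi * I * τ / 4 - Real.pi * I * z)) * e2

private lemma theta1_ratio (τ : ℂ) (hτ : τ ≠ 0) (z s : ℂ) :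
    theta1 (-1/τ) ((z + s)/τ) / theta1 (-1/τ) (s/τ) =
      Complex.exp (Real.pi * I * (z ^ 2 + 2 * z * s) / τ) *
        (theta1 τ (z + s) / theta1 τ s) := by
  have hc : (-I * (-I * τ) ^ (1/2 : ℂ) : ℂ) ≠ 0 := by
    refine mul_ne_zero (neg_ne_zero.mpr I_ne_zero) ?_
    intro h
    rcases (Complex.cpow_eq_zero_iff _ _).mp h with ⟨h1, -⟩
    exact hτ (by simpa [Complex.I_ne_zero] using mul_eq_zero.mp h1)
  have grp : ∀ x : ℂ, -I * (-I * τ) ^ (1/2 : ℂ) * Complex.exp (Real.pi * I * x ^ 2 / τ) *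
      theta1 τ x = (-I * (-I * τ) ^ (1/2 : ℂ)) *
      (Complex.exp (Real.pi * I * x ^ 2 / τ) * theta1 τ x) := fun x => by ring
  rw [theta1_modular τ hτ (z + s), theta1_modular τ hτ s, grp, grp,
    mul_div_mul_left _ _ hc, mul_div_mul_comm, ← Complex.exp_sub]
  congr 2
  ring

/-- Z(−1/τ, z/τ; t₁/τ, t₂/τ) = e^{3πiz²/τ} Z(τ, z; t₁, t₂). -/
theorem Z_modular {V : Type*} [Fintype V] (w : V → Fin 3 → ℤ × ℤ)
    (hbal : ∀ v : V, ∑ j : Fin 3, w v j = 0)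
    (τ t₁ t₂ : ℂ) (hτ : 0 < τ.im)
    (ht : ∀ (v : V) (j : Fin 3),
      ((w v j).1 : ℂ) * t₁ + ((w v j).2 : ℂ) * t₂ ∉ lattice τ)
    (z : ℂ) :
    Z w (-1 / τ) (z / τ) (t₁ / τ) (t₂ / τ) =
      Complex.exp (3 * Real.pi * Complex.I * z ^ 2 / τ) * Z w τ z t₁ t₂ := by
  have hτ0 : τ ≠ 0 := fun h => by simp [h] at hτ
  rw [Z, Z, Finset.mul_sum]
  refine Finset.sum_congr rfl fun v _ => ?_
  have ha : ((w v 0).1 : ℂ) + ((w v 1).1 : ℂ) + ((w v 2).1 : ℂ) = 0 := by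
    have := congrArg Prod.fst (hbal v)
    rw [Prod.fst_sum, Fin.sum_univ_three] at this
    exact_mod_cast this
  have hb : ((w v 0).2 : ℂ) + ((w v 1).2 : ℂ) + ((w v 2).2 : ℂ) = 0 := by
    have := congrArg Prod.snd (hbal v)
    rw [Prod.snd_sum, Fin.sum_univ_three] at this
    exact_mod_cast this
  have hfac : ∀ j : Fin 3,
      theta1 (-1/τ) (z/τ + ((w v j).1 : ℂ) * (t₁/τ) + ((w v j).2 : ℂ) * (t₂/τ)) /
        theta1 (-1/τ) (((w v j).1 : ℂ) * (t₁/τ) + ((w v j).2 : ℂ) * (t₂/τ)) =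
      Complex.exp (Real.pi * I *
          (z ^ 2 + 2 * z * (((w v j).1 : ℂ) * t₁ + ((w v j).2 : ℂ) * t₂)) / τ) *
        (theta1 τ (z + ((w v j).1 : ℂ) * t₁ + ((w v j).2 : ℂ) * t₂) /
          theta1 τ (((w v j).1 : ℂ) * t₁ + ((w v j).2 : ℂ) * t₂)) := by
    intro j
    have h := theta1_ratio τ hτ0 z (((w v j).1 : ℂ) * t₁ + ((w v j).2 : ℂ) * t₂)
    rw [show (z + (((w v j).1 : ℂ) * t₁ + ((w v j).2 : ℂ) * t₂))/τ =
        z/τ + ((w v j).1 : ℂ) * (t₁/τ) + ((w v j).2 : ℂ) * (t₂/τ) by ring,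
      show (((w v j).1 : ℂ) * t₁ + ((w v j).2 : ℂ) * t₂)/τ =
        ((w v j).1 : ℂ) * (t₁/τ) + ((w v j).2 : ℂ) * (t₂/τ) by ring,
      show z + (((w v j).1 : ℂ) * t₁ + ((w v j).2 : ℂ) * t₂) =
        z + ((w v j).1 : ℂ) * t₁ + ((w v j).2 : ℂ) * t₂ by ring] at h
    exact h
  simp only [hfac]
  rw [Finset.prod_mul_distrib, ← Complex.exp_sum]
  congr 2
  rw [Fin.sum_univ_three]
  linear_combination (2 * (Real.pi : ℂ) * I * z * t₁ / τ) * ha +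
    (2 * (Real.pi : ℂ) * I * z * t₂ / τ) * hb
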